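/- Let P ⊆ R^m and Q ⊆ R^{m+n} be full-dimensional polytopes with P = proj_x Q (projection onto the first m coordinates). If the inequality αᵀx + β ≤ 0 (involving only the x variables) is valid for Q, then it is valid for P; and if it defines a facet of Q whose affine hull does not contain the origin, then it defines a facet of P. -/

import Mathlib

open Finset

lemma linIndep_affineIndep {ι V : Type*} [AddCommGroup V] [Module ℝ V] {p : ι → V}
    (h : LinearIndependent ℝ p) : AffineIndependent ℝ p := by
  rw [affineIndependent_iff]
  intro s w _ hsum e he
  classical
  have := linearIndependent_iff'.1 h s w hsum
  exact this e he

lemma affineIndep_linIndep {ι V : Type*} [AddCommGroup V] [Module ℝ V] [Fintype ι] {p : ι → V}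
    (h : AffineIndependent ℝ p) (h0 : (0 : V) ∉ affineSpan ℝ (Set.range p)) :
    LinearIndependent ℝ p := by
  classical
  rw [Fintype.linearIndependent_iff]
  intro w hw
  by_cases hs : ∑ i, w i = 0
  · exact fun i => (affineIndependent_iff.1 h Finset.univ w hs hw) i (Finset.mem_univ i)
  · exfalso
    apply h0
    have h1 : ∑ i, (fun i => w i / (∑ j, w j)) i = 1 := by
      rw [← Finset.sum_div]; field_simp
    have := affineCombination_mem_affineSpan (k := ℝ) h1 p
    convert this using 1
    rw [Finset.univ.affineCombination_eq_linear_combination p _ h1]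
    rw [eq_comm]
    calc ∑ i, (w i / ∑ j, w j) • p i = (∑ j, w j)⁻¹ • ∑ i, w i • p i := by
          rw [Finset.smul_sum]; congr 1; ext i; rw [smul_smul]; congr 1; field_simp
      _ = 0 := by rw [hw, smul_zero]



/-- Facet extension under projection: if `P = proj_x Q` for full-dimensional
polytopes `P ⊆ ℝ^m`, `Q ⊆ ℝ^{m+n}`, and `αᵀx + β ≤ 0` (in the `x` variables only)
is valid for `Q`, then it is valid for `P`; moreover, if it is facet-defining for
`Q` — witnessed by `m+n` affinely independent points of `Q` on the hyperplane,
whose affine hull does not contain the origin — then it is facet-defining for `P`,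
i.e. there are `m` affinely independent points of `P` satisfying it with equality. -/
theorem stmt16 (m n : ℕ)
    (Q : Set ((Fin m → ℝ) × (Fin n → ℝ)))
    (SQ : Set ((Fin m → ℝ) × (Fin n → ℝ))) (hSQ : SQ.Finite) (hQpoly : Q = convexHull ℝ SQ)
    (hQfull : affineSpan ℝ Q = ⊤)
    (P : Set (Fin m → ℝ)) (hP : P = Prod.fst '' Q)
    (SP : Set (Fin m → ℝ)) (hSP : SP.Finite) (hPpoly : P = convexHull ℝ SP)
    (hPfull : affineSpan ℝ P = ⊤)
    (α : Fin m → ℝ) (β : ℝ)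
    (hvalid : ∀ p ∈ Q, ∑ i, α i * p.1 i + β ≤ 0) :
    (∀ z ∈ P, ∑ i, α i * z i + β ≤ 0) ∧
    (∀ pts : Fin (m + n) → (Fin m → ℝ) × (Fin n → ℝ),
      (∀ k, pts k ∈ Q) →
      (∀ k, ∑ i, α i * (pts k).1 i + β = 0) →
      AffineIndependent ℝ pts →
      (0 : (Fin m → ℝ) × (Fin n → ℝ)) ∉ affineSpan ℝ (Set.range pts) →
      ∃ pts' : Fin m → (Fin m → ℝ),
        (∀ k, pts' k ∈ P) ∧ (∀ k, ∑ i, α i * pts' k i + β = 0) ∧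
        AffineIndependent ℝ pts') := by
  classical
  constructor
  · intro z hz
    rw [hP] at hz
    obtain ⟨p, hp, rfl⟩ := hz
    exact hvalid p hp
  · intro pts hmem heq hindep h0
    have hlin : LinearIndependent ℝ pts := affineIndep_linIndep hindep h0
    have hcard : Fintype.card (Fin (m + n)) = Module.finrank ℝ ((Fin m → ℝ) × (Fin n → ℝ)) := by
      simp [Module.finrank_prod, Module.finrank_fin_fun]
    have hspan : Submodule.span ℝ (Set.range pts) = ⊤ :=
      hlin.span_eq_top_of_card_eq_finrank' hcard
    have hspan' : Submodule.span ℝ (Prod.fst '' Set.range pts) = ⊤ := by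
      have himg : Prod.fst '' Set.range pts =
          ⇑(LinearMap.fst ℝ (Fin m → ℝ) (Fin n → ℝ)) '' Set.range pts := rfl
      rw [himg, ← Submodule.map_span, hspan, Submodule.map_top, LinearMap.range_eq_top]
      exact Prod.fst_surjective
    obtain ⟨b, hbsub, hbspan, hblin⟩ :=
      exists_linearIndependent ℝ (Prod.fst '' Set.range pts)
    rw [hspan'] at hbspan
    have hbfin : b.Finite := ((Set.finite_range pts).image _).subset hbsub
    haveI : Fintype b := hbfin.fintype
    have hbasis : Module.Basis b ℝ (Fin m → ℝ) :=
      Module.Basis.mk hblin (by rw [Subtype.range_coe, hbspan])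
    have hcardb : Fintype.card b = m := by
      have := Module.finrank_eq_card_basis hbasis
      rw [Module.finrank_fin_fun] at this
      omega
    let e : Fin m ≃ b := (Fintype.equivFinOfCardEq hcardb).symm
    refine ⟨fun k => (e k : Fin m → ℝ), ?_, ?_, ?_⟩
    · intro k
      obtain ⟨q, ⟨j, rfl⟩, hq⟩ := hbsub (e k).2
      rw [hP]
      exact ⟨pts j, hmem j, hq⟩
    · intro k
      obtain ⟨q, ⟨j, rfl⟩, hq⟩ := hbsub (e k).2
      simp only [← hq]
      exact heq j
    · exact linIndep_affineIndep (hblin.comp e e.injective)
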